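/- For α ∈ ℝ, β ∈ ℂ, and natural number n, define Z_n(β, α) = (1/√(2π)) · ∫_ℝ x^n · exp(−x²/2 + i·α·x³ + β·x) dx. Then for every n ≥ 1: Z_n(β, α) = (n−1)·Z_{n−2}(β, α) + 3·i·α·Z_{n+1}(β, α) + β·Z_{n−1}(β, α), where Z_{−1} is interpreted as 0. -/

import Mathlib

open MeasureTheory Real

/-- The auxiliary integrals `Z_n(β, α) = (1/√(2π)) ∫ xⁿ exp(-x²/2 + iαx³ + βx) dx`. -/
noncomputable def cubicZn (n : ℕ) (β : ℂ) (α : ℝ) : ℂ :=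
  (1 / Real.sqrt (2 * π) : ℝ) *
    ∫ x : ℝ, (x : ℂ) ^ n *
      Complex.exp (-(x : ℂ) ^ 2 / 2 + Complex.I * α * (x : ℂ) ^ 3 + β * x)

open Filter

noncomputable def E (β : ℂ) (α : ℝ) (x : ℝ) : ℂ :=
  Complex.exp (-(x : ℂ) ^ 2 / 2 + Complex.I * α * (x : ℂ) ^ 3 + β * x)

lemma norm_E (β : ℂ) (α : ℝ) (x : ℝ) :
    ‖E β α x‖ = Real.exp (-x ^ 2 / 2 + β.re * x) := by
  rw [E, Complex.norm_exp]
  congr 1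
  simp [← Complex.ofReal_pow, Complex.add_re, Complex.div_re, Complex.mul_re, Complex.mul_im]

lemma exp_bound (b x : ℝ) :
    Real.exp (-x ^ 2 / 2 + b * x) ≤ Real.exp (b ^ 2) * Real.exp (-(1/4) * x ^ 2) := by
  rw [← Real.exp_add]
  apply Real.exp_le_exp.2
  nlinarith [sq_nonneg (x / 2 - b)]

lemma cont_E (β : ℂ) (α : ℝ) (k : ℕ) :
    Continuous (fun x : ℝ => (x : ℂ) ^ k * E β α x) := by
  apply Continuous.mul (by fun_prop)
  unfold E
  fun_prop

lemma integrable_aux (k : ℕ) (β : ℂ) (α : ℝ) :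
    Integrable (fun x : ℝ => (x : ℂ) ^ k * E β α x) := by
  have hmaj : Integrable (fun x : ℝ => |x| ^ k * Real.exp (-(1/4) * x ^ 2)) := by
    have := (integrable_rpow_mul_exp_neg_mul_sq (b := 1/4) (s := (k:ℝ)) (by norm_num)
      (lt_of_lt_of_le neg_one_lt_zero (Nat.cast_nonneg k))).abs
    simpa [Real.rpow_natCast, abs_mul, abs_pow, abs_of_pos (Real.exp_pos _)] using this
  apply Integrable.mono'
    (g := fun x : ℝ => Real.exp (β.re ^ 2) * (|x| ^ k * Real.exp (-(1/4) * x ^ 2)))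
  · exact hmaj.const_mul _
  · exact (cont_E β α k).aestronglyMeasurable
  · refine Eventually.of_forall fun x => ?_
    rw [norm_mul, norm_pow, Complex.norm_real, norm_E]
    calc |x| ^ k * Real.exp (-x ^ 2 / 2 + β.re * x)
        ≤ |x| ^ k * (Real.exp (β.re ^ 2) * Real.exp (-(1/4) * x ^ 2)) := by
          exact mul_le_mul_of_nonneg_left (exp_bound _ _) (by positivity)
      _ = Real.exp (β.re ^ 2) * (|x| ^ k * Real.exp (-(1/4) * x ^ 2)) := by ring

lemma tendsto_atTop_aux (m : ℕ) (b : ℝ) :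
    Tendsto (fun x : ℝ => |x| ^ m * Real.exp (-x ^ 2 / 2 + b * x)) atTop (nhds 0) := by
  apply squeeze_zero' (g := fun x : ℝ => x ^ m * Real.exp (-x))
  · filter_upwards [eventually_ge_atTop (0:ℝ)] with x hx
    positivity
  · filter_upwards [eventually_ge_atTop (0:ℝ), eventually_ge_atTop (2*(b+1))] with x hx hx2
    rw [abs_of_nonneg hx]
    apply mul_le_mul_of_nonneg_left _ (by positivity)
    apply Real.exp_le_exp.2
    nlinarith
  · exact tendsto_pow_mul_exp_neg_atTop_nhds_zero m

lemma tendsto_E_atTop (m : ℕ) (β : ℂ) (α : ℝ) :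
    Tendsto (fun x : ℝ => (x : ℂ) ^ m * E β α x) atTop (nhds 0) := by
  rw [tendsto_zero_iff_norm_tendsto_zero]
  have : (fun x : ℝ => ‖(x : ℂ) ^ m * E β α x‖)
      = fun x : ℝ => |x| ^ m * Real.exp (-x ^ 2 / 2 + β.re * x) := by
    funext x; rw [norm_mul, norm_pow, Complex.norm_real, Real.norm_eq_abs, norm_E]
  rw [this]
  exact tendsto_atTop_aux m β.re

lemma tendsto_E_atBot (m : ℕ) (β : ℂ) (α : ℝ) :
    Tendsto (fun x : ℝ => (x : ℂ) ^ m * E β α x) atBot (nhds 0) := by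
  rw [tendsto_zero_iff_norm_tendsto_zero]
  have : (fun x : ℝ => ‖(x : ℂ) ^ m * E β α x‖)
      = (fun x : ℝ => |x| ^ m * Real.exp (-x ^ 2 / 2 + (-β.re) * x)) ∘ Neg.neg := by
    funext x
    simp only [Function.comp_apply, abs_neg, norm_mul, norm_pow, Complex.norm_real,
      Real.norm_eq_abs, norm_E]
    congr 2
    ring
  rw [this]
  exact (tendsto_atTop_aux m (-β.re)).comp tendsto_neg_atBot_atTop

lemma hasDerivAt_aux (m : ℕ) (β : ℂ) (α : ℝ) (x : ℝ) :
    HasDerivAt (fun x : ℝ => (x : ℂ) ^ m * E β α x)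
      ((m : ℂ) * (x : ℂ) ^ (m - 1) * E β α x
        - (x : ℂ) ^ (m + 1) * E β α x
        + 3 * Complex.I * α * (x : ℂ) ^ (m + 2) * E β α x
        + β * (x : ℂ) ^ m * E β α x) x := by
  have hw : HasDerivAt (fun z : ℂ => -z ^ 2 / 2 + Complex.I * α * z ^ 3 + β * z)
      (-(2 * (x:ℂ) ^ 1) / 2 + Complex.I * α * (3 * (x:ℂ) ^ 2) + β * 1) (x : ℂ) :=
    (((hasDerivAt_pow 2 (x:ℂ)).neg.div_const 2).add
      ((hasDerivAt_pow 3 (x:ℂ)).const_mul (Complex.I * α))).add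
      ((hasDerivAt_id (x:ℂ)).const_mul β)
  have hF : HasDerivAt (fun z : ℂ => z ^ m * Complex.exp (-z ^ 2 / 2 + Complex.I * α * z ^ 3 + β * z))
      ((m : ℂ) * (x:ℂ) ^ (m - 1) * Complex.exp (-(x:ℂ) ^ 2 / 2 + Complex.I * α * (x:ℂ) ^ 3 + β * (x:ℂ))
        + (x:ℂ) ^ m * (Complex.exp (-(x:ℂ) ^ 2 / 2 + Complex.I * α * (x:ℂ) ^ 3 + β * (x:ℂ))
            * (-(2 * (x:ℂ) ^ 1) / 2 + Complex.I * α * (3 * (x:ℂ) ^ 2) + β * 1))) (x : ℂ) :=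
    (hasDerivAt_pow m (x:ℂ)).mul hw.cexp
  have := hF.comp_ofReal
  convert this using 1
  · unfold E
    ring
  · unfold E
    ring

lemma key_identity (m : ℕ) (β : ℂ) (α : ℝ) :
    (∫ x : ℝ, (x : ℂ) ^ (m + 1) * E β α x)
      = (m : ℂ) * (∫ x : ℝ, (x : ℂ) ^ (m - 1) * E β α x)
        + 3 * Complex.I * α * (∫ x : ℝ, (x : ℂ) ^ (m + 2) * E β α x)
        + β * (∫ x : ℝ, (x : ℂ) ^ m * E β α x) := by
  have h1 := integrable_aux (m - 1) β α
  have h2 := integrable_aux (m + 1) β α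
  have h3 := integrable_aux (m + 2) β α
  have h4 := integrable_aux m β α
  have e1 : Integrable (fun x : ℝ => (m : ℂ) * ((x : ℂ) ^ (m - 1) * E β α x)) volume :=
    h1.const_mul _
  have e12 : Integrable (fun x : ℝ =>
      (m : ℂ) * ((x : ℂ) ^ (m - 1) * E β α x) - (x : ℂ) ^ (m + 1) * E β α x) volume := e1.sub h2
  have e3 : Integrable (fun x : ℝ => 3 * Complex.I * α * ((x : ℂ) ^ (m + 2) * E β α x)) volume :=
    h3.const_mul _
  have e123 : Integrable (fun x : ℝ =>
      (m : ℂ) * ((x : ℂ) ^ (m - 1) * E β α x) - (x : ℂ) ^ (m + 1) * E β α x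
        + 3 * Complex.I * α * ((x : ℂ) ^ (m + 2) * E β α x)) volume := e12.add e3
  have e4 : Integrable (fun x : ℝ => β * ((x : ℂ) ^ m * E β α x)) volume := h4.const_mul _
  have hint : Integrable (fun x : ℝ =>
      (m : ℂ) * ((x : ℂ) ^ (m - 1) * E β α x) - (x : ℂ) ^ (m + 1) * E β α x
        + 3 * Complex.I * α * ((x : ℂ) ^ (m + 2) * E β α x)
        + β * ((x : ℂ) ^ m * E β α x)) volume := e123.add e4
  have hderiv : ∀ x : ℝ, HasDerivAt (fun x : ℝ => (x : ℂ) ^ m * E β α x)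
      ((m : ℂ) * ((x : ℂ) ^ (m - 1) * E β α x) - (x : ℂ) ^ (m + 1) * E β α x
        + 3 * Complex.I * α * ((x : ℂ) ^ (m + 2) * E β α x)
        + β * ((x : ℂ) ^ m * E β α x)) x := by
    intro x
    have := hasDerivAt_aux m β α x
    convert this using 1
    ring
  have hIic : (∫ x in Set.Iic (0:ℝ),
      ((m : ℂ) * ((x : ℂ) ^ (m - 1) * E β α x) - (x : ℂ) ^ (m + 1) * E β α x
        + 3 * Complex.I * α * ((x : ℂ) ^ (m + 2) * E β α x)
        + β * ((x : ℂ) ^ m * E β α x)))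
      = ((0:ℝ) : ℂ) ^ m * E β α 0 - 0 :=
    integral_Iic_of_hasDerivAt_of_tendsto' (fun x _ => hderiv x) hint.integrableOn
      (tendsto_E_atBot m β α)
  have hIoi : (∫ x in Set.Ioi (0:ℝ),
      ((m : ℂ) * ((x : ℂ) ^ (m - 1) * E β α x) - (x : ℂ) ^ (m + 1) * E β α x
        + 3 * Complex.I * α * ((x : ℂ) ^ (m + 2) * E β α x)
        + β * ((x : ℂ) ^ m * E β α x)))
      = 0 - ((0:ℝ) : ℂ) ^ m * E β α 0 :=
    integral_Ioi_of_hasDerivAt_of_tendsto' (fun x _ => hderiv x) hint.integrableOn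
      (tendsto_E_atTop m β α)
  have hzero : (∫ x : ℝ,
      ((m : ℂ) * ((x : ℂ) ^ (m - 1) * E β α x) - (x : ℂ) ^ (m + 1) * E β α x
        + 3 * Complex.I * α * ((x : ℂ) ^ (m + 2) * E β α x)
        + β * ((x : ℂ) ^ m * E β α x))) = 0 := by
    rw [← setIntegral_univ, ← Set.Iic_union_Ioi (a := (0:ℝ)),
      setIntegral_union (Set.Iic_disjoint_Ioi le_rfl) measurableSet_Ioi
        hint.integrableOn hint.integrableOn, hIic, hIoi]
    ring
  have hlin := hzero
  rw [integral_add e123 e4, integral_add e12 e3, integral_sub e1 h2,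
    integral_const_mul, integral_const_mul, integral_const_mul] at hlin
  linear_combination -hlin

/-- The integration-by-parts recursion
`Z_n = (n-1) Z_{n-2} + 3iα Z_{n+1} + β Z_{n-1}` for `n ≥ 1`
(for `n = 1` the first term has vanishing coefficient, encoding `Z_{-1} = 0`). -/
theorem cubicZn_recursion (n : ℕ) (hn : 1 ≤ n) (β : ℂ) (α : ℝ) :
    cubicZn n β α =
      ((n : ℂ) - 1) * cubicZn (n - 2) β α + 3 * Complex.I * α * cubicZn (n + 1) β α +
        β * cubicZn (n - 1) β α := by
  obtain ⟨m, rfl⟩ : ∃ m, n = m + 1 := ⟨n - 1, (Nat.succ_pred_eq_of_pos hn).symm⟩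
  have hZ : ∀ k : ℕ, cubicZn k β α
      = ((1 / Real.sqrt (2 * π) : ℝ) : ℂ) * ∫ x : ℝ, (x : ℂ) ^ k * E β α x := fun k => rfl
  have h2 : m + 1 - 2 = m - 1 := by omega
  have h1 : m + 1 - 1 = m := by omega
  rw [h2, h1, hZ, hZ, hZ, hZ, show m + 1 + 1 = m + 2 from rfl]
  have := key_identity m β α
  rw [this]
  push_cast
  ring
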